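/- Let n ≥ 1. There is a constant c_n > 0 such that for every polynomial p(ξ) = b₀ + b₁ξ + ⋯ + b_nξⁿ whose largest coefficient in absolute value equals 1 (i.e. max_{0≤i≤n} |b_i| = 1) and for every 0 < γ ≤ c_n, there exist points ξ₁, …, ξ_{n(n+1)/2} ∈ ℝ such that {ξ ∈ [-4,4] : |p(ξ)| < γ} ⊂ ⋃_{i=1}^{n(n+1)/2} [ξ_i − 4γ^{1/2ⁿ}, ξ_i + 4γ^{1/2ⁿ}]. -/

import Mathlib

noncomputable section
open Polynomial Finset

lemma vand_bound (n : ℕ) (hn : 1 ≤ n) :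
    ∃ C : ℝ, 0 < C ∧ ∀ (a : Fin (n+1) → ℝ) (γ : ℝ),
      (∀ k : Fin (n+1), |∑ j : Fin (n+1), a j * (((k:ℕ) : ℝ)/(n : ℝ)) ^ (j : ℕ)| ≤ γ) →
      ∀ j, |a j| ≤ C * γ := by
  have hn0 : (n : ℝ) ≠ 0 := Nat.cast_ne_zero.mpr (by omega)
  set s : Fin (n+1) → ℝ := fun k => ((k:ℕ) : ℝ)/(n : ℝ) with hs
  have hinj : Function.Injective s := by
    intro k k' h
    have : ((k:ℕ) : ℝ) = ((k':ℕ) : ℝ) := by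
      have h' : ((k:ℕ):ℝ)/(n:ℝ) = ((k':ℕ):ℝ)/(n:ℝ) := h
      rw [div_left_inj' hn0] at h'; exact_mod_cast h'
    exact Fin.ext (Nat.cast_injective this)
  set V := Matrix.vandermonde s with hV
  have hdet : IsUnit V.det := by
    rw [hV, Matrix.det_vandermonde]
    refine isUnit_iff_ne_zero.mpr ?_
    refine Finset.prod_ne_zero_iff.mpr fun i _ => Finset.prod_ne_zero_iff.mpr fun j hj => ?_
    have hij : i < j := Finset.mem_Ioi.mp hj
    exact sub_ne_zero.mpr fun h => absurd (hinj h) (ne_of_gt hij)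
  refine ⟨1 + ∑ j, ∑ k, |(V⁻¹) j k|, by positivity, ?_⟩
  intro a γ hval j
  have hγ0 : 0 ≤ γ := le_trans (abs_nonneg _) (hval 0)
  have ha : V⁻¹.mulVec (V.mulVec a) = a := by
    rw [Matrix.mulVec_mulVec, Matrix.nonsing_inv_mul _ hdet, Matrix.one_mulVec]
  have haj : a j = ∑ k, (V⁻¹) j k * (V.mulVec a) k := by
    conv_lhs => rw [← ha]
    rfl
  have hVa : ∀ k, |(V.mulVec a) k| ≤ γ := by
    intro k
    have : (V.mulVec a) k = ∑ j : Fin (n+1), a j * s k ^ (j:ℕ) := by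
      simp [hV, Matrix.mulVec, dotProduct, Matrix.vandermonde, mul_comm]
    rw [this]; exact hval k
  calc |a j| = |∑ k, (V⁻¹) j k * (V.mulVec a) k| := by rw [haj]
    _ ≤ ∑ k, |(V⁻¹) j k * (V.mulVec a) k| := Finset.abs_sum_le_sum_abs _ _
    _ ≤ ∑ k, |(V⁻¹) j k| * γ := by
        refine Finset.sum_le_sum fun k _ => ?_
        rw [abs_mul]
        exact mul_le_mul_of_nonneg_left (hVa k) (abs_nonneg _)
    _ = (∑ k, |(V⁻¹) j k|) * γ := by rw [← Finset.sum_mul]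
    _ ≤ (1 + ∑ j, ∑ k, |(V⁻¹) j k|) * γ := by
        refine mul_le_mul_of_nonneg_right ?_ hγ0
        have : (∑ k, |(V⁻¹) j k|) ≤ ∑ j, ∑ k, |(V⁻¹) j k| :=
          Finset.single_le_sum (f := fun j => ∑ k, |(V⁻¹) j k|)
            (fun i _ => Finset.sum_nonneg fun k _ => abs_nonneg _) (Finset.mem_univ j)
        linarith

lemma key_bound (n : ℕ) (hn : 1 ≤ n) :
    ∃ m : ℝ, 0 < m ∧ ∀ b : ℕ → ℝ, (∃ i ≤ n, |b i| = 1) →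
      ∀ x ℓ γ : ℝ, |x| ≤ 4 → 0 < ℓ → ℓ ≤ 1 →
      (∀ t ∈ Set.Icc x (x+ℓ), |∑ i ∈ Finset.range (n+1), b i * t ^ i| ≤ γ) →
      m * ℓ^n ≤ γ := by
  obtain ⟨C, hC, hvand⟩ := vand_bound n hn
  set κ : ℝ := ((n+1 : ℝ) * 16^n)⁻¹ with hκ
  have hκ0 : 0 < κ := by positivity
  refine ⟨κ / C, by positivity, ?_⟩
  rintro b ⟨i₀, hi₀n, hbi₀⟩ x ℓ γ hx hℓ hℓ1 hsmall
  set P : Polynomial ℝ := ∑ i ∈ Finset.range (n+1), Polynomial.C (b i) * Polynomial.X ^ i with hP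
  have hPeval : ∀ t : ℝ, P.eval t = ∑ i ∈ Finset.range (n+1), b i * t ^ i := by
    intro t; simp [hP, Polynomial.eval_finset_sum]
  have hPdeg : P.natDegree ≤ n := by
    refine Polynomial.natDegree_sum_le_of_forall_le _ _ fun i hi => ?_
    refine (Polynomial.natDegree_C_mul_le _ _).trans ?_
    simpa using Nat.lt_succ_iff.mp (Finset.mem_range.mp hi)
  have hPcoeff : ∀ i ≤ n, P.coeff i = b i := by
    intro i hi
    rw [hP, Polynomial.finset_sum_coeff]
    rw [Finset.sum_eq_single i]
    · simp
    · intro j _ hji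
      simp [Polynomial.coeff_C_mul, Polynomial.coeff_X_pow, Ne.symm hji]
    · intro h; exact absurd (Finset.mem_range.mpr (Nat.lt_succ_of_le hi)) h
  set Q : Polynomial ℝ := Polynomial.taylor x P with hQ
  have hQdeg : Q.natDegree ≤ n := by rw [hQ, Polynomial.natDegree_taylor]; exact hPdeg
  have hne : (Finset.range (n+1)).Nonempty := ⟨0, by simp⟩
  set M : ℝ := (Finset.range (n+1)).sup' hne (fun j => |Q.coeff j|) with hM
  have hMle : ∀ j ≤ n, |Q.coeff j| ≤ M := by
    intro j hj
    rw [hM]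
    exact Finset.le_sup' (fun j => |Q.coeff j|) (Finset.mem_range.mpr (Nat.lt_succ_of_le hj))
  have hM0 : 0 ≤ M := le_trans (abs_nonneg _) (hMle 0 (by omega))
  have hPQ : P = Polynomial.taylor (-x) Q := by
    rw [hQ, Polynomial.taylor_taylor]
    norm_num
  have hMκ : κ ≤ M := by
    have h1 : (1 : ℝ) = |(Polynomial.taylor (-x) Q).coeff i₀| := by
      rw [← hPQ, hPcoeff i₀ hi₀n, hbi₀]
    have hhd : (Polynomial.hasseDeriv i₀ Q).natDegree < n + 1 := by
      exact Nat.lt_succ_of_le ((Polynomial.natDegree_hasseDeriv_le _ _).trans (by omega))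
    rw [Polynomial.taylor_coeff, Polynomial.eval_eq_sum_range' hhd] at h1
    have hterm : ∀ m ∈ Finset.range (n+1),
        |(Polynomial.hasseDeriv i₀ Q).coeff m * (-x) ^ m| ≤ 16^n * M := by
      intro m hm
      have hmn : m ≤ n := Nat.lt_succ_iff.mp (Finset.mem_range.mp hm)
      rw [Polynomial.hasseDeriv_coeff, abs_mul, abs_mul]
      have hch : |((m + i₀).choose i₀ : ℝ)| ≤ 4^n := by
        rw [abs_of_nonneg (by positivity)]
        have h2 : (m + i₀).choose i₀ ≤ 2 ^ (m + i₀) := by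
          calc (m + i₀).choose i₀ ≤ ∑ j ∈ Finset.range (m + i₀ + 1), (m + i₀).choose j :=
              Finset.single_le_sum (fun j _ => Nat.zero_le _)
                (Finset.mem_range.mpr (by omega))
          _ = 2 ^ (m + i₀) := Nat.sum_range_choose _
        calc ((m + i₀).choose i₀ : ℝ) ≤ (2:ℝ) ^ (m + i₀) := by exact_mod_cast h2
        _ ≤ (2:ℝ) ^ (2*n) := by
            apply pow_le_pow_right₀ (by norm_num); omega
        _ = 4 ^ n := by rw [pow_mul]; norm_num
      have hQc : |Q.coeff (m + i₀)| ≤ M := by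
        rcases le_or_gt (m + i₀) n with h | h
        · exact hMle _ h
        · rw [Polynomial.coeff_eq_zero_of_natDegree_lt (lt_of_le_of_lt hQdeg h)]
          simpa using hM0
      have hxp : |(-x) ^ m| ≤ 4 ^ n := by
        rw [abs_pow, abs_neg]
        calc |x| ^ m ≤ 4 ^ m := pow_le_pow_left₀ (abs_nonneg _) hx m
        _ ≤ (4:ℝ) ^ n := pow_le_pow_right₀ (by norm_num) hmn
      calc |((m + i₀).choose i₀ : ℝ)| * |Q.coeff (m + i₀)| * |(-x) ^ m|
          ≤ 4^n * M * 4^n := by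
            apply mul_le_mul (mul_le_mul hch hQc (abs_nonneg _) (by positivity)) hxp
              (abs_nonneg _) (by positivity)
        _ = 16^n * M := by
            rw [show (16:ℝ)^n = 4^n * 4^n by rw [← mul_pow]; norm_num]; ring
    have h2 : (1:ℝ) ≤ (n+1 : ℝ) * (16^n * M) := by
      calc (1:ℝ) = |∑ m ∈ Finset.range (n+1),
            (Polynomial.hasseDeriv i₀ Q).coeff m * (-x) ^ m| := h1
      _ ≤ ∑ m ∈ Finset.range (n+1), |(Polynomial.hasseDeriv i₀ Q).coeff m * (-x) ^ m| :=
          Finset.abs_sum_le_sum_abs _ _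
      _ ≤ ∑ _m ∈ Finset.range (n+1), 16^n * M := Finset.sum_le_sum hterm
      _ = (n+1 : ℝ) * (16^n * M) := by
          rw [Finset.sum_const, Finset.card_range]; push_cast; ring
    have hpos : (0:ℝ) < (n+1 : ℝ) * 16^n := by positivity
    rw [hκ, inv_le_iff_one_le_mul₀ hpos]
    ring_nf
    ring_nf at h2
    linarith
  set a : Fin (n+1) → ℝ := fun j => Q.coeff j * ℓ ^ (j:ℕ) with ha
  have hval : ∀ k : Fin (n+1), |∑ j : Fin (n+1), a j * (((k:ℕ) : ℝ)/(n : ℝ)) ^ (j : ℕ)| ≤ γ := by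
    intro k
    set u : ℝ := ((k:ℕ) : ℝ)/(n : ℝ) with hu
    have hu0 : 0 ≤ u := by positivity
    have hu1 : u ≤ 1 := by
      rw [hu, div_le_one (by exact_mod_cast Nat.lt_of_lt_of_le Nat.zero_lt_one hn)]
      exact_mod_cast Nat.lt_succ_iff.mp k.isLt
    have hQn : Q.natDegree < n + 1 := Nat.lt_succ_of_le hQdeg
    have hsum : ∑ j : Fin (n+1), a j * u ^ (j:ℕ) = P.eval (ℓ * u + x) := by
      rw [← Polynomial.taylor_eval x P (ℓ * u), ← hQ,
        Polynomial.eval_eq_sum_range' hQn]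
      rw [show (∑ j : Fin (n+1), a j * u ^ (j:ℕ))
          = ∑ j ∈ Finset.range (n+1), Q.coeff j * ℓ ^ j * u ^ j from
        Fin.sum_univ_eq_sum_range (fun j => Q.coeff j * ℓ ^ j * u ^ j) (n+1)]
      refine Finset.sum_congr rfl fun j _ => ?_
      rw [mul_pow]; ring
    have hmem : ℓ * u + x ∈ Set.Icc x (x + ℓ) := by
      constructor
      · nlinarith
      · nlinarith
    rw [hsum, hPeval]
    exact hsmall _ hmem
  obtain ⟨js, hjsmem, hjs⟩ := Finset.exists_mem_eq_sup' hne (fun j => |Q.coeff j|)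
  have hjsn : js ≤ n := Nat.lt_succ_iff.mp (Finset.mem_range.mp hjsmem)
  have hbig := hvand a γ hval ⟨js, Finset.mem_range.mp hjsmem⟩
  have hℓpow : ℓ ^ n ≤ ℓ ^ js := pow_le_pow_of_le_one hℓ.le hℓ1 hjsn
  have hfin : κ * ℓ ^ n ≤ C * γ := by
    calc κ * ℓ ^ n ≤ M * ℓ ^ js := by
          apply mul_le_mul hMκ hℓpow (by positivity) hM0
    _ = |Q.coeff js| * |ℓ ^ js| := by
          rw [← hjs, abs_of_nonneg (by positivity)]
    _ = |a ⟨js, Finset.mem_range.mp hjsmem⟩| := by rw [← abs_mul]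
    _ ≤ C * γ := hbig
  rw [div_mul_eq_mul_div, div_le_iff₀ hC, mul_comm γ C]
  exact hfin

/-- sublevel-set covering estimate for one-variable polynomials of degree
at most `n` with largest coefficient of absolute value `1`: the set where `|p| < γ` in
`[-4,4]` is covered by `n(n+1)/2` intervals of radius `4γ^{1/2ⁿ}`. -/
theorem statement14 (n : ℕ) (hn : 1 ≤ n) :
    ∃ c : ℝ, 0 < c ∧
      ∀ b : ℕ → ℝ, (∀ i ≤ n, |b i| ≤ 1) → (∃ i ≤ n, |b i| = 1) →
        ∀ γ : ℝ, 0 < γ → γ ≤ c →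
          ∃ ξp : Fin (n * (n + 1) / 2) → ℝ,
            {ξ : ℝ | ξ ∈ Set.Icc (-4 : ℝ) 4 ∧
                |∑ i ∈ Finset.range (n + 1), b i * ξ ^ i| < γ} ⊆
              ⋃ i : Fin (n * (n + 1) / 2),
                Set.Icc (ξp i - 4 * γ ^ ((1 : ℝ) / 2 ^ n))
                  (ξp i + 4 * γ ^ ((1 : ℝ) / 2 ^ n)) := by
  classical
  obtain ⟨m, hm, hkey⟩ := key_bound n hn
  have hnne : (n:ℝ) ≠ 0 := Nat.cast_ne_zero.mpr (by omega)
  have hnpos : (0:ℝ) < n := by exact_mod_cast Nat.lt_of_lt_of_le Nat.zero_lt_one hn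
  set e : ℝ := 1/(n:ℝ) - 1/(2:ℝ)^n with he
  have he0 : 0 < e := by
    rw [he, sub_pos]
    have h2n : (n:ℝ) < 2^n := by exact_mod_cast (Nat.lt_two_pow_self (n := n))
    exact div_lt_div_of_pos_left one_pos hnpos h2n
  set A : ℝ := min 1 (4 * m ^ ((1:ℝ)/n)) with hA
  have hmrp : 0 < m ^ ((1:ℝ)/n) := Real.rpow_pos_of_pos hm _
  have hA0 : 0 < A := lt_min one_pos (by positivity)
  set c : ℝ := min 1 (min (m/2^n) (A ^ ((1:ℝ)/e))) with hc
  have hc0 : 0 < c :=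
    lt_min one_pos (lt_min (by positivity) (Real.rpow_pos_of_pos hA0 _))
  refine ⟨c, hc0, ?_⟩
  intro b _hble hbw γ hγ hγc
  have hr0 : (0:ℝ) < 4 * γ ^ ((1 : ℝ) / 2 ^ n) := by
    have := Real.rpow_pos_of_pos hγ ((1 : ℝ) / 2 ^ n)
    positivity
  set r : ℝ := 4 * γ ^ ((1 : ℝ) / 2 ^ n) with hrdef
  set P : Polynomial ℝ := ∑ i ∈ Finset.range (n+1), Polynomial.C (b i) * Polynomial.X ^ i
    with hP
  have hPeval : ∀ t : ℝ, (∑ i ∈ Finset.range (n+1), b i * t ^ i) = P.eval t := by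
    intro t; simp [hP, Polynomial.eval_finset_sum]
  have hPdeg : P.natDegree ≤ n := by
    refine Polynomial.natDegree_sum_le_of_forall_le _ _ fun i hi => ?_
    refine (Polynomial.natDegree_C_mul_le _ _).trans ?_
    simpa using Nat.lt_succ_iff.mp (Finset.mem_range.mp hi)
  have hPcoeff : ∀ i ≤ n, P.coeff i = b i := by
    intro i hi
    rw [hP, Polynomial.finset_sum_coeff]
    rw [Finset.sum_eq_single i]
    · simp
    · intro j _ hji
      simp [Polynomial.coeff_C_mul, Polynomial.coeff_X_pow, Ne.symm hji]
    · intro h; exact absurd (Finset.mem_range.mpr (Nat.lt_succ_of_le hi)) h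
  by_cases hder : Polynomial.derivative P = 0
  · -- p is constant, of absolute value 1, so the sublevel set is empty
    refine ⟨fun _ => 0, ?_⟩
    intro ξ hξ
    exfalso
    obtain ⟨hξI, hξγ⟩ := hξ
    have hPC : P = Polynomial.C (P.coeff 0) := Polynomial.eq_C_of_derivative_eq_zero hder
    obtain ⟨i₀, hi₀, hbi₀⟩ := hbw
    have hb1 : |b 0| = 1 := by
      rcases Nat.eq_zero_or_pos i₀ with h0 | h0
      · rwa [h0] at hbi₀
      · exfalso
        have : P.coeff i₀ = 0 := by
          rw [hPC, Polynomial.coeff_C, if_neg (by omega)]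
        rw [hPcoeff i₀ hi₀] at this
        rw [this] at hbi₀
        simp at hbi₀
    have : |∑ i ∈ Finset.range (n + 1), b i * ξ ^ i| = 1 := by
      rw [hPeval, hPC, Polynomial.eval_C, hPcoeff 0 (by omega)]
      exact hb1
    rw [this] at hξγ
    have hc1 : c ≤ 1 := min_le_left _ _
    linarith
  · -- main case: p' ≠ 0
    set R : Finset ℝ := insert (-4:ℝ) (Polynomial.derivative P).roots.toFinset with hR
    have hRcard : R.card ≤ n := by
      have h1 : R.card ≤ (Polynomial.derivative P).roots.toFinset.card + 1 :=
        Finset.card_insert_le _ _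
      have h2 : (Polynomial.derivative P).roots.toFinset.card
          ≤ Multiset.card (Polynomial.derivative P).roots := Multiset.toFinset_card_le _
      have h3 : Multiset.card (Polynomial.derivative P).roots
          ≤ (Polynomial.derivative P).natDegree := Polynomial.card_roots' _
      have h4 : (Polynomial.derivative P).natDegree ≤ P.natDegree - 1 :=
        Polynomial.natDegree_derivative_le _
      omega
    set w : ℝ → ℝ := fun ξ =>
      if h : ((R.filter (fun v => v ≤ ξ)).Nonempty)
      then (R.filter (fun v => v ≤ ξ)).max' h else -4 with hw
    have hwspec : ∀ ξ : ℝ, -4 ≤ ξ →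
        w ξ ∈ R ∧ w ξ ≤ ξ ∧ ∀ ρ ∈ R, ρ ≤ ξ → ρ ≤ w ξ := by
      intro ξ hξ
      have hmem : (-4:ℝ) ∈ R.filter (fun v => v ≤ ξ) :=
        Finset.mem_filter.mpr ⟨Finset.mem_insert_self _ _, hξ⟩
      have hnef : (R.filter (fun v => v ≤ ξ)).Nonempty := ⟨-4, hmem⟩
      have hwx : w ξ = (R.filter (fun v => v ≤ ξ)).max' hnef := by
        rw [hw]; exact dif_pos hnef
      have hmax := Finset.max'_mem _ hnef
      rw [Finset.mem_filter] at hmax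
      refine ⟨by rw [hwx]; exact hmax.1, by rw [hwx]; exact hmax.2, ?_⟩
      intro ρ hρ hρξ
      rw [hwx]
      exact Finset.le_max' (R.filter (fun v => v ≤ ξ)) ρ (Finset.mem_filter.mpr ⟨hρ, hρξ⟩)
    -- the key pair estimate
    have hpair : ∀ ξ ζ : ℝ, ξ ∈ Set.Icc (-4:ℝ) 4 → |P.eval ξ| < γ →
        ζ ∈ Set.Icc (-4:ℝ) 4 → |P.eval ζ| < γ → ξ ≤ ζ → w ξ = w ζ → ζ - ξ ≤ r := by
      intro ξ ζ hξI hξγ hζI hζγ hle hww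
      rcases eq_or_lt_of_le hle with rfl | hlt
      · linarith
      have hnoroot : ∀ ρ ∈ Set.Ioo ξ ζ, (Polynomial.derivative P).eval ρ ≠ 0 := by
        intro ρ hρ hval0
        have hρR : ρ ∈ R := by
          rw [hR]
          exact Finset.mem_insert_of_mem
            (Multiset.mem_toFinset.mpr (Polynomial.mem_roots'.mpr ⟨hder, hval0⟩))
        have h1 : ρ ≤ w ζ := (hwspec ζ hζI.1).2.2 ρ hρR hρ.2.le
        have h2 : w ξ ≤ ξ := (hwspec ξ hξI.1).2.1
        rw [← hww] at h1
        linarith [hρ.1]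
      have hcont : ContinuousOn (fun t => P.eval t) (Set.Icc ξ ζ) :=
        (Polynomial.continuous P).continuousOn
      have hdiff : DifferentiableOn ℝ (fun t => P.eval t) (interior (Set.Icc ξ ζ)) :=
        (Polynomial.differentiable P).differentiableOn
      have habsξ := abs_lt.mp hξγ
      have habsζ := abs_lt.mp hζγ
      have hmono : ∀ t ∈ Set.Icc ξ ζ, |P.eval t| ≤ γ := by
        by_cases hsgn : ∀ s ∈ Set.Ioo ξ ζ, 0 ≤ (Polynomial.derivative P).eval s
        · have hmo : MonotoneOn (fun t => P.eval t) (Set.Icc ξ ζ) := by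
            refine monotoneOn_of_deriv_nonneg (convex_Icc _ _) hcont hdiff ?_
            intro s hs
            rw [interior_Icc] at hs
            rw [Polynomial.deriv]
            exact hsgn s hs
          intro t ht
          have h1 : P.eval ξ ≤ P.eval t := hmo (Set.left_mem_Icc.mpr hle) ht ht.1
          have h2 : P.eval t ≤ P.eval ζ := hmo ht (Set.right_mem_Icc.mpr hle) ht.2
          rw [abs_le]
          constructor <;> linarith
        · have hneg : ∃ s₀ ∈ Set.Ioo ξ ζ, (Polynomial.derivative P).eval s₀ < 0 := by
            push_neg at hsgn
            obtain ⟨s₀, hs₀, h⟩ := hsgn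
            exact ⟨s₀, hs₀, h⟩
          have hsgn' : ∀ s ∈ Set.Ioo ξ ζ, (Polynomial.derivative P).eval s ≤ 0 := by
            by_contra hcon
            push_neg at hcon
            obtain ⟨s₁, hs₁, hpos⟩ := hcon
            obtain ⟨s₀, hs₀, hneg0⟩ := hneg
            have hcd : ContinuousOn (fun t => (Polynomial.derivative P).eval t)
                (Set.uIcc s₀ s₁) := (Polynomial.continuous _).continuousOn
            have h0mem : (0:ℝ) ∈ Set.uIcc ((Polynomial.derivative P).eval s₀)
                ((Polynomial.derivative P).eval s₁) :=
              Set.mem_uIcc.mpr (Or.inl ⟨hneg0.le, hpos.le⟩)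
            obtain ⟨ρ, hρmem, hρ0⟩ := intermediate_value_uIcc hcd h0mem
            have hsub : Set.uIcc s₀ s₁ ⊆ Set.Ioo ξ ζ :=
              Set.ordConnected_Ioo.uIcc_subset hs₀ hs₁
            exact hnoroot ρ (hsub hρmem) hρ0
          have hmo : AntitoneOn (fun t => P.eval t) (Set.Icc ξ ζ) := by
            refine antitoneOn_of_deriv_nonpos (convex_Icc _ _) hcont hdiff ?_
            intro s hs
            rw [interior_Icc] at hs
            rw [Polynomial.deriv]
            exact hsgn' s hs
          intro t ht
          have h1 : P.eval t ≤ P.eval ξ := hmo (Set.left_mem_Icc.mpr hle) ht ht.1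
          have h2 : P.eval ζ ≤ P.eval t := hmo ht (Set.right_mem_Icc.mpr hle) ht.2
          rw [abs_le]
          constructor <;> linarith
      -- apply the key bound on [ξ, ξ + min (ζ-ξ) 1]
      set ℓ' : ℝ := min (ζ - ξ) 1 with hℓ'
      have hℓ'pos : 0 < ℓ' := lt_min (by linarith) one_pos
      have hsubint : ∀ t ∈ Set.Icc ξ (ξ + ℓ'),
          |∑ i ∈ Finset.range (n+1), b i * t ^ i| ≤ γ := by
        intro t ht
        rw [hPeval]
        refine hmono t ⟨ht.1, ?_⟩
        have : ℓ' ≤ ζ - ξ := min_le_left _ _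
        have := ht.2
        linarith
      have hxabs : |ξ| ≤ 4 := abs_le.mpr ⟨hξI.1, hξI.2⟩
      have hkb := hkey b hbw ξ ℓ' γ hxabs hℓ'pos (min_le_right _ _) hsubint
      have hγc' : γ ≤ m / 2^n :=
        hγc.trans ((min_le_right _ _).trans (min_le_left _ _))
      have hℓ'n : ℓ' ^ n ≤ (1/2 : ℝ) ^ n := by
        have h1 : m * ℓ' ^ n ≤ m * (1/2)^n := by
          calc m * ℓ' ^ n ≤ γ := hkb
          _ ≤ m / 2^n := hγc'
          _ = m * (1/2)^n := by rw [div_pow, one_pow]; ring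
        exact le_of_mul_le_mul_left h1 hm
      have hℓ'half : ℓ' ≤ 1/2 :=
        (pow_le_pow_iff_left₀ hℓ'pos.le (by norm_num) (by omega)).mp hℓ'n
      have hℓeq : ℓ' = ζ - ξ := by
        have hlt1 : ζ - ξ < 1 := by
          by_contra hcon
          push_neg at hcon
          rw [hℓ', min_eq_right hcon] at hℓ'half
          linarith
        rw [hℓ', min_eq_left hlt1.le]
      have hℓn : (ζ - ξ) ^ n ≤ γ / m := by
        rw [← hℓeq]
        rw [le_div_iff₀' hm]
        exact hkb
      have hstep : ζ - ξ ≤ (γ/m) ^ ((1:ℝ)/n) := by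
        have h1 : ((ζ - ξ) ^ n : ℝ) ^ ((1:ℝ)/n) ≤ (γ/m) ^ ((1:ℝ)/n) :=
          Real.rpow_le_rpow (pow_nonneg (by linarith) n) hℓn (by positivity)
        rwa [← Real.rpow_natCast (ζ - ξ) n, ← Real.rpow_mul (by linarith),
          mul_one_div, div_self hnne, Real.rpow_one] at h1
      refine hstep.trans ?_
      -- (γ/m)^(1/n) ≤ r
      rw [Real.div_rpow hγ.le hm.le]
      have hsplit : γ ^ ((1:ℝ)/n) = γ ^ e * γ ^ ((1:ℝ)/2^n) := by
        rw [← Real.rpow_add hγ, he]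
        ring_nf
      have hγe : γ ^ e ≤ 4 * m ^ ((1:ℝ)/n) := by
        have hcA : c ≤ A ^ ((1:ℝ)/e) :=
          (min_le_right _ _).trans (min_le_right _ _)
        calc γ ^ e ≤ (A ^ ((1:ℝ)/e)) ^ e :=
              Real.rpow_le_rpow hγ.le (hγc.trans hcA) he0.le
        _ = A := by
            rw [one_div, Real.rpow_inv_rpow hA0.le he0.ne']
        _ ≤ 4 * m ^ ((1:ℝ)/n) := min_le_right _ _
      have hγp : (0:ℝ) ≤ γ ^ ((1:ℝ)/2^n) := (Real.rpow_pos_of_pos hγ _).le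
      calc γ ^ ((1:ℝ)/n) / m ^ ((1:ℝ)/n)
          = γ ^ e * γ ^ ((1:ℝ)/2^n) / m ^ ((1:ℝ)/n) := by rw [hsplit]
        _ ≤ (4 * m ^ ((1:ℝ)/n)) * γ ^ ((1:ℝ)/2^n) / m ^ ((1:ℝ)/n) := by
            gcongr
        _ = r := by
            rw [hrdef]
            field_simp
    -- construct the covering
    set rep : ℝ → ℝ := fun v =>
      if h : ∃ ξ, (ξ ∈ Set.Icc (-4:ℝ) 4 ∧ |P.eval ξ| < γ) ∧ w ξ = v
      then h.choose else 0 with hrep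
    have hNn : n ≤ n * (n + 1) / 2 := by
      rw [Nat.le_div_iff_mul_le (by norm_num)]
      nlinarith
    refine ⟨fun i => rep (R.toList.getD i (-4)), ?_⟩
    intro ξ hξ
    obtain ⟨hξI, hξγ'⟩ := hξ
    rw [hPeval] at hξγ'
    have hvR : w ξ ∈ R := (hwspec ξ hξI.1).1
    obtain ⟨j, hj, hjv⟩ := List.mem_iff_getElem.mp (Finset.mem_toList.mpr hvR)
    have hjlt : j < n * (n + 1) / 2 := by
      have hlen := Finset.length_toList R
      omega
    refine Set.mem_iUnion.mpr ⟨⟨j, hjlt⟩, ?_⟩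
    have hgetD : R.toList.getD ((⟨j, hjlt⟩ : Fin (n * (n + 1) / 2)) : ℕ) (-4) = w ξ := by
      rw [show ((⟨j, hjlt⟩ : Fin (n * (n + 1) / 2)) : ℕ) = j from rfl]
      rw [List.getD_eq_getElem _ _ hj, hjv]
    have hex : ∃ ξ', (ξ' ∈ Set.Icc (-4:ℝ) 4 ∧ |P.eval ξ'| < γ) ∧ w ξ' = w ξ :=
      ⟨ξ, ⟨hξI, hξγ'⟩, rfl⟩
    have hrepw : rep (w ξ) = hex.choose := by rw [hrep]; exact dif_pos hex
    obtain ⟨⟨hξ₀I, hξ₀γ⟩, hwξ₀⟩ := hex.choose_spec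
    show ξ ∈ Set.Icc (rep (R.toList.getD ((⟨j, hjlt⟩ : Fin (n * (n + 1) / 2)) : ℕ) (-4)) - r)
      (rep (R.toList.getD ((⟨j, hjlt⟩ : Fin (n * (n + 1) / 2)) : ℕ) (-4)) + r)
    rw [hgetD, hrepw, Set.mem_Icc]
    rcases le_total ξ hex.choose with hord | hord
    · have hdist := hpair ξ hex.choose hξI hξγ' hξ₀I hξ₀γ hord hwξ₀.symm
      constructor <;> linarith
    · have hdist := hpair hex.choose ξ hξ₀I hξ₀γ hξI hξγ' hord hwξ₀
      constructor <;> linarith
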